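/- Let q ≥ 2, w ≥ 1 and d be integers with d even and 2 ≤ d ≤ 2w, and set t = (2w-d+2)/2 (so that t = ⌈(2w-d+1)/2⌉). Then for every integer n ≥ w one has A_q(n,d,w) ≤ (q-1)^{t-1}·C(n,t)/C(w,t), where C(a,b) denotes the binomial coefficient. -/

import Mathlib

open Finset

/-- The weight of a vector: the number of nonzero coordinates. -/
def wtv {n : ℕ} (x : Fin n → ℕ) : ℕ := (univ.filter fun i => x i ≠ 0).card

/-- `C` is an `(n,d,w)_q` constant weight code: a code over the alphabet `{0,...,q-1}`
of length `n`, constant weight `w`, and minimum Hamming distance at least `d`. -/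
def IsCWC (q n d w : ℕ) (C : Finset (Fin n → ℕ)) : Prop :=
  (∀ x ∈ C, ∀ i, x i < q) ∧ (∀ x ∈ C, wtv x = w) ∧
  (∀ x ∈ C, ∀ y ∈ C, x ≠ y → d ≤ hammingDist x y)

/-- `Aq q n d w` is the maximum size of an `(n,d,w)_q` constant weight code. -/
noncomputable def Aq (q n d w : ℕ) : ℕ :=
  sSup {m | ∃ C : Finset (Fin n → ℕ), IsCWC q n d w C ∧ C.card = m}


lemma key (q w d t n : ℕ) (hq : 2 ≤ q) (hw : 1 ≤ w)
    (hd1 : 2 ≤ d) (hd2 : d ≤ 2 * w) (ht : 2 * t = 2 * w - d + 2)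
    (hn : w ≤ n) (C : Finset (Fin n → ℕ)) (hC : IsCWC q n d w C) :
    C.card * Nat.choose w t ≤ (q - 1) ^ (t - 1) * Nat.choose n t := by
  have htpos : 1 ≤ t := by omega
  have htw : t ≤ w := by omega
  have hn1 : 1 ≤ n := le_trans hw hn
  set i0 : Fin n := ⟨0, hn1⟩ with hi0
  set pick : Finset (Fin n) → Fin n :=
    fun T => if h : T.Nonempty then T.min' h else i0 with hpick
  have pick_mem : ∀ T : Finset (Fin n), T.Nonempty → pick T ∈ T := by
    intro T h
    simp only [hpick, dif_pos h]
    exact T.min'_mem h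
  set supp : (Fin n → ℕ) → Finset (Fin n) :=
    fun x => univ.filter fun i => x i ≠ 0 with hsupp
  set P : Finset (Σ _ : Fin n → ℕ, Finset (Fin n)) :=
    C.sigma fun x => (supp x).powersetCard t with hP
  set Q : Finset (Σ _ : Finset (Fin n), Fin n → ℕ) :=
    (univ.powersetCard t).sigma fun T =>
      Fintype.piFinset fun i => if i ∈ T.erase (pick T) then Finset.Ioo 0 q else ({0} : Finset ℕ)
    with hQ
  have cardP : P.card = C.card * Nat.choose w t := by
    rw [hP, Finset.card_sigma]
    rw [Finset.sum_congr rfl (fun x hx => ?_), Finset.sum_const, smul_eq_mul]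
    rw [Finset.card_powersetCard]
    have : (supp x).card = w := hC.2.1 x hx
    rw [this]
  have cardQ : Q.card = (q - 1) ^ (t - 1) * Nat.choose n t := by
    rw [hQ, Finset.card_sigma]
    rw [Finset.sum_congr rfl (fun T hT => ?_), Finset.sum_const, smul_eq_mul]
    · rw [Finset.card_powersetCard, Finset.card_univ, Fintype.card_fin, mul_comm]
    · rw [Fintype.card_piFinset]
      have hTcard : T.card = t := (Finset.mem_powersetCard.mp hT).2
      have hTne : T.Nonempty := by
        rw [← Finset.card_pos, hTcard]; omega
      have hE : (T.erase (pick T)).card = t - 1 := by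
        rw [Finset.card_erase_of_mem (pick_mem T hTne), hTcard]
      calc ∏ i, (if i ∈ T.erase (pick T) then Finset.Ioo 0 q else ({0} : Finset ℕ)).card
          = ∏ i, (if i ∈ T.erase (pick T) then q - 1 else 1) := by
            apply Finset.prod_congr rfl; intro i _
            split <;> simp [Nat.card_Ioo]
        _ = ∏ i ∈ univ ∩ T.erase (pick T), (q - 1) := by
            rw [Finset.prod_ite_mem]
        _ = (q - 1) ^ (t - 1) := by
            rw [Finset.univ_inter, Finset.prod_const, hE]
  set Φ : (Σ _ : Fin n → ℕ, Finset (Fin n)) → (Σ _ : Finset (Fin n), Fin n → ℕ) :=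
    fun p => ⟨p.2, fun i => if i ∈ p.2.erase (pick p.2) then p.1 i else 0⟩ with hΦ
  have hmaps : ∀ p ∈ P, Φ p ∈ Q := by
    rintro ⟨x, T⟩ hp
    rw [hP, Finset.mem_sigma] at hp
    obtain ⟨hxC, hT⟩ := hp
    rw [Finset.mem_powersetCard] at hT
    rw [hQ, Finset.mem_sigma]
    constructor
    · exact Finset.mem_powersetCard.mpr ⟨Finset.subset_univ _, hT.2⟩
    · rw [Fintype.mem_piFinset]
      intro i
      by_cases hi : i ∈ T.erase (pick T)
      · simp only [hΦ, hi, if_pos, if_true]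
        have hiT : i ∈ T := Finset.mem_of_mem_erase hi
        have : x i ≠ 0 := by
          have := hT.1 hiT
          rw [hsupp] at this
          simpa using this
        simp only [hi, if_true, Finset.mem_Ioo]
        exact ⟨Nat.pos_of_ne_zero this, hC.1 x hxC i⟩
      · simp [hΦ, hi, -Finset.mem_erase]
  have hinj : Set.InjOn Φ P := by
    rintro ⟨x, T⟩ hp1 ⟨y, T'⟩ hp2 heq
    rw [hP, Finset.coe_sigma] at hp1 hp2
    simp only [Set.mem_sigma_iff, Finset.mem_coe] at hp1 hp2
    obtain ⟨hxC, hT⟩ := hp1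
    obtain ⟨hyC, hT'⟩ := hp2
    rw [Finset.mem_powersetCard] at hT hT'
    simp only [hΦ, Sigma.mk.inj_iff] at heq
    obtain ⟨hTT, hfg⟩ := heq
    subst hTT
    rw [heq_iff_eq] at hfg
    have hagree : ∀ i ∈ T.erase (pick T), x i = y i := by
      intro i hi
      have := congrFun hfg i
      simpa [hi] using this
    have hxy : x = y := by
      by_contra hne
      have hd := hC.2.2 x hxC y hyC hne
      have hTne : T.Nonempty := by
        rw [← Finset.card_pos, hT.2]; omega
      have hsub : ({i | x i ≠ y i} : Finset (Fin n)) ⊆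
          insert (pick T) ((supp x \ T) ∪ (supp y \ T)) := by
        intro i hi
        rw [Finset.mem_filter] at hi
        obtain ⟨-, hi⟩ := hi
        by_cases hiT : i ∈ T
        · by_cases hip : i = pick T
          · exact Finset.mem_insert.mpr (Or.inl hip)
          · exact absurd (hagree i (Finset.mem_erase.mpr ⟨hip, hiT⟩)) hi
        · apply Finset.mem_insert.mpr
          right
          rw [Finset.mem_union]
          rcases Nat.eq_zero_or_pos (x i) with hx0 | hx0
          · right
            rw [Finset.mem_sdiff]
            refine ⟨?_, hiT⟩
            rw [hsupp]
            simp only [Finset.mem_filter, Finset.mem_univ, true_and]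
            omega
          · left
            rw [Finset.mem_sdiff]
            refine ⟨?_, hiT⟩
            rw [hsupp]
            simp only [Finset.mem_filter, Finset.mem_univ, true_and]
            omega
      have hcard : hammingDist x y ≤ 1 + ((w - t) + (w - t)) := by
        have hsx : (supp x \ T).card = w - t := by
          have hwx : (supp x).card = w := hC.2.1 x hxC
          rw [Finset.card_sdiff_of_subset hT.1, hwx, hT.2]
        have hsy : (supp y \ T).card = w - t := by
          have hwy : (supp y).card = w := hC.2.1 y hyC
          rw [Finset.card_sdiff_of_subset hT'.1, hwy, hT'.2]
        calc hammingDist x y = ({i | x i ≠ y i} : Finset (Fin n)).card := rfl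
          _ ≤ (insert (pick T) ((supp x \ T) ∪ (supp y \ T))).card :=
              Finset.card_le_card hsub
          _ ≤ ((supp x \ T) ∪ (supp y \ T)).card + 1 := Finset.card_insert_le _ _
          _ ≤ ((supp x \ T).card + (supp y \ T).card) + 1 := by
              exact Nat.add_le_add_right (Finset.card_union_le _ _) 1
          _ = 1 + ((w - t) + (w - t)) := by rw [hsx, hsy]; ring
      omega
    subst hxy
    rfl
  calc C.card * Nat.choose w t = P.card := cardP.symm
    _ ≤ Q.card := Finset.card_le_card_of_injOn Φ hmaps hinj
    _ = (q - 1) ^ (t - 1) * Nat.choose n t := cardQ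

theorem stmt7 (q w d t : ℕ) (hq : 2 ≤ q) (hw : 1 ≤ w) (heven : Even d)
    (hd1 : 2 ≤ d) (hd2 : d ≤ 2 * w) (ht : 2 * t = 2 * w - d + 2) :
    ∀ n : ℕ, w ≤ n →
      (Aq q n d w : ℝ) ≤
        ((q : ℝ) - 1) ^ (t - 1) * (Nat.choose n t : ℝ) / (Nat.choose w t : ℝ) := by
  intro n hn
  have hcw : 0 < Nat.choose w t := Nat.choose_pos (by omega)
  have hbound : ∀ m ∈ {m | ∃ C : Finset (Fin n → ℕ), IsCWC q n d w C ∧ C.card = m},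
      m ≤ ((q - 1) ^ (t - 1) * Nat.choose n t) / Nat.choose w t := by
    rintro m ⟨C, hC, rfl⟩
    rw [Nat.le_div_iff_mul_le hcw]
    exact key q w d t n hq hw hd1 hd2 ht hn C hC
  have hne : {m | ∃ C : Finset (Fin n → ℕ), IsCWC q n d w C ∧ C.card = m}.Nonempty :=
    ⟨0, ∅, ⟨by simp, by simp, by simp⟩, rfl⟩
  have hsup : Aq q n d w ≤ ((q - 1) ^ (t - 1) * Nat.choose n t) / Nat.choose w t :=
    csSup_le hne hbound
  calc (Aq q n d w : ℝ)
      ≤ ((((q - 1) ^ (t - 1) * Nat.choose n t) / Nat.choose w t : ℕ) : ℝ) := by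
        exact_mod_cast hsup
    _ ≤ (((q - 1) ^ (t - 1) * Nat.choose n t : ℕ) : ℝ) / ((Nat.choose w t : ℕ) : ℝ) :=
        Nat.cast_div_le
    _ = ((q : ℝ) - 1) ^ (t - 1) * (Nat.choose n t : ℝ) / (Nat.choose w t : ℝ) := by
        push_cast [Nat.cast_sub (by omega : 1 ≤ q)]
        ring
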